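/- Let F be a finite field of characteristic 2 and order q = 2^{2m} with m a positive integer, and let d be an invertible exponent over F. Then there exists some a ∈ F with a ≠ 0 such that W_{F,d}(a) > 2^m + 2^{⌊m/2⌋}. -/

import Mathlib

open scoped BigOperators

/-- The canonical additive character of a finite field `F` of characteristic `p`:
`ψ(x) = exp(2πi·Tr(x)/p)`, where `Tr` is the absolute trace from `F` to `𝔽_p = ZMod p`. -/
noncomputable def canonicalPsi (F : Type*) [Field F] [Fintype F] (p : ℕ) [CharP F p]
    (x : F) : ℂ :=
  letI : Algebra (ZMod p) F := ZMod.algebra F p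
  Complex.exp (2 * Real.pi * Complex.I * ((Algebra.trace (ZMod p) F x).val : ℂ) / (p : ℂ))

/-- The Weil sum `W_{F,d}(a) = ∑_{x ∈ F} ψ(x^d − a·x)`. -/
noncomputable def weilSum (F : Type*) [Field F] [Fintype F] (p : ℕ) [CharP F p]
    (d : ℕ) (a : F) : ℂ :=
  ∑ x : F, canonicalPsi F p (x ^ d - a * x)

section Aux

open Finset

/-- absolute trace to `ZMod 2` -/
noncomputable def tr2 (F : Type*) [Field F] [Fintype F] [CharP F 2] (x : F) : ZMod 2 :=
  letI : Algebra (ZMod 2) F := ZMod.algebra F 2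
  Algebra.trace (ZMod 2) F x

/-- the real-valued canonical character in characteristic two -/
noncomputable def psiR (F : Type*) [Field F] [Fintype F] [CharP F 2] (x : F) : ℝ :=
  (-1 : ℝ) ^ (tr2 F x).val

variable {F : Type*} [Field F] [Fintype F] [CharP F 2]

theorem tr2_add (x y : F) : tr2 F (x + y) = tr2 F x + tr2 F y := map_add _ x y

theorem tr2_zero : tr2 F 0 = 0 := map_zero _

theorem tr2_sq (x : F) : tr2 F (x ^ 2) = tr2 F x := by
  unfold tr2
  letI : Algebra (ZMod 2) F := ZMod.algebra F 2
  haveI : Fact (Nat.Prime 2) := ⟨Nat.prime_two⟩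
  haveI : ExpChar F 2 := ExpChar.prime (Fact.out)
  let σ : F ≃ₐ[ZMod 2] F :=
    { frobeniusEquiv F 2 with
      commutes' := fun r => by
        show frobenius F 2 _ = _
        rw [frobenius_def, ← map_pow, ZMod.pow_card r] }
  have h := Algebra.trace_eq_of_algEquiv σ x
  have hσ : σ x = x ^ 2 := rfl
  rw [hσ] at h; exact h

theorem psiR_values (x : F) : psiR F x = 1 ∨ psiR F x = -1 := by
  unfold psiR
  rcases Nat.even_or_odd (tr2 F x).val with h | h
  · left; exact h.neg_one_pow
  · right; exact h.neg_one_pow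

theorem psiR_zero : psiR F 0 = 1 := by unfold psiR; rw [tr2_zero]; simp

private theorem neg_one_pow_mod_two (n : ℕ) : (-1 : ℝ) ^ (n % 2) = (-1) ^ n := by
  conv_rhs => rw [← Nat.div_add_mod n 2]
  rw [pow_add, pow_mul]
  norm_num

theorem psiR_add (x y : F) : psiR F (x + y) = psiR F x * psiR F y := by
  unfold psiR
  rw [tr2_add, ZMod.val_add, neg_one_pow_mod_two, pow_add]

theorem psiR_eq_one_of_tr (x : F) (h : tr2 F x = 0) : psiR F x = 1 := by
  unfold psiR; rw [h]; simp

theorem psiR_eq_neg_one_of_tr (x : F) (h : tr2 F x ≠ 0) : psiR F x = -1 := by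
  unfold psiR
  have h2 : (tr2 F x).val ≠ 0 := fun hc => h ((ZMod.val_eq_zero _).mp hc)
  have h3 : (tr2 F x).val < 2 := ZMod.val_lt _
  have h4 : (tr2 F x).val = 1 := by omega
  rw [h4]; simp

theorem psiR_pow2pow (k : ℕ) (x : F) : psiR F (x ^ 2 ^ k) = psiR F x := by
  induction k with
  | zero => simp
  | succ n ih =>
      have h : x ^ 2 ^ (n + 1) = (x ^ 2 ^ n) ^ 2 := by rw [← pow_mul, pow_succ]
      unfold psiR at *
      rw [h, tr2_sq]
      exact ih

theorem canonicalPsi_eq_psiR (x : F) : canonicalPsi F 2 x = ((psiR F x : ℝ) : ℂ) := by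
  unfold canonicalPsi psiR tr2
  have h3 : (letI : Algebra (ZMod 2) F := ZMod.algebra F 2
      (Algebra.trace (ZMod 2) F x).val) < 2 := ZMod.val_lt _
  set v := (letI : Algebra (ZMod 2) F := ZMod.algebra F 2
      (Algebra.trace (ZMod 2) F x).val) with hv
  interval_cases v
  · simp
  · norm_num
    rw [show 2 * (Real.pi : ℂ) * Complex.I / 2 = (Real.pi : ℂ) * Complex.I by ring]
    rw [Complex.exp_pi_mul_I]

end Aux

set_option maxHeartbeats 2000000 in
open Finset in
/-- Feng-Leung-Xiang: if `F` has characteristic `2` and order `2^{2m}`, then there is some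
nonzero `a ∈ F` such that `W_{F,d}(a) > 2^m + 2^{⌊m/2⌋}`. -/
theorem exists_weilSum_gt (F : Type*) [Field F] [Fintype F] [CharP F 2]
    (m : ℕ) (hm : 0 < m) (hcard : Fintype.card F = 2 ^ (2 * m))
    (d : ℕ) (hd : 0 < d) (hgcd : Nat.gcd d (Fintype.card F - 1) = 1) :
    ∃ a : F, a ≠ 0 ∧ ∃ r : ℝ, weilSum F 2 d a = (r : ℂ) ∧
      (2 : ℝ) ^ m + 2 ^ (m / 2) < r := by
  classical
  set Q : ℕ := 2 ^ m with hQdef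
  have hQ2 : 2 ≤ Q := by
    have h : 2 ^ 1 ≤ 2 ^ m := Nat.pow_le_pow_right (by norm_num) hm
    simpa using h
  have hQ0 : 0 < Q := by omega
  have hq : Fintype.card F = Q ^ 2 := by
    rw [hcard, hQdef, ← pow_mul, mul_comm 2 m, pow_mul]
  set w : F → ℝ := fun a => ∑ x : F, psiR F (x ^ d + a * x) with hwdef
  have hweil : ∀ a : F, weilSum F 2 d a = ((w a : ℝ) : ℂ) := by
    intro a
    unfold weilSum
    simp only [hwdef]
    push_cast
    refine Finset.sum_congr rfl fun x _ => ?_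
    rw [CharTwo.sub_eq_add, canonicalPsi_eq_psiR]
  -- degenerate case: trivial character
  by_cases htr : ∀ x : F, tr2 F x = 0
  · refine ⟨1, one_ne_zero, (Fintype.card F : ℝ), ?_, ?_⟩
    · rw [hweil 1]
      norm_cast
      simp only [hwdef]
      have h : ∀ x : F, psiR F (x ^ d + 1 * x) = 1 := fun x => psiR_eq_one_of_tr _ (htr _)
      rw [Finset.sum_congr rfl fun x _ => h x]
      simp
    · rw [hcard]
      push_cast
      have h1 : (2:ℝ) ^ (m/2) < 2 ^ m := by
        apply pow_lt_pow_right₀ (by norm_num)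
        omega
      have h2 : (2:ℝ) ^ m + 2 ^ m ≤ 2 ^ (2*m) := by
        have h3 : (2:ℝ) ^ m + 2 ^ m = 2 ^ (m+1) := by ring
        rw [h3]
        apply pow_le_pow_right₀ (by norm_num)
        omega
      linarith
  push_neg at htr
  obtain ⟨x₀, hx₀⟩ := htr
  have hpsix₀ : psiR F x₀ = -1 := psiR_eq_neg_one_of_tr _ hx₀
  -- orthogonality over F
  have sum_psiR : ∑ x : F, psiR F x = 0 := by
    have h1 : ∑ x : F, psiR F (x₀ + x) = ∑ x : F, psiR F x :=
      Fintype.sum_equiv (Equiv.addLeft x₀) _ _ (fun x => rfl)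
    have h2 : ∑ x : F, psiR F (x₀ + x) = - ∑ x : F, psiR F x := by
      simp_rw [psiR_add, hpsix₀, neg_one_mul]
      exact Finset.sum_neg_distrib _
    linarith
  have sum_psiR_mul : ∀ u : F, u ≠ 0 → ∑ x : F, psiR F (u * x) = 0 := by
    intro u hu
    have h1 : ∑ x : F, psiR F (u * x) = ∑ x : F, psiR F x :=
      Fintype.sum_equiv (Equiv.mulLeft₀ u hu) _ _ (fun x => rfl)
    rw [h1]; exact sum_psiR
  -- the subfield of order Q, as the root set of X^Q = X
  set KF : Finset F := Finset.univ.filter (fun x : F => x ^ Q = x) with hKFdef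
  have memKF : ∀ x : F, x ∈ KF ↔ x ^ Q = x := by
    intro x; rw [hKFdef, Finset.mem_filter]; simp
  have hKF0 : (0:F) ∈ KF := by rw [memKF]; exact zero_pow (by omega)
  have hKF1 : (1:F) ∈ KF := by rw [memKF]; exact one_pow _
  haveI hfact2 : Fact (Nat.Prime 2) := ⟨Nat.prime_two⟩
  haveI hexp2 : ExpChar F 2 := ExpChar.prime (Fact.out)
  have haddQ : ∀ a b : F, (a + b) ^ Q = a ^ Q + b ^ Q := by
    intro a b
    rw [hQdef]
    exact add_pow_char_pow a b 2 m
  have hcardR : ((Fintype.card F : ℕ) : ℝ) = (Q:ℝ)^2 := by rw [hq, Nat.cast_pow]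
  have hKFadd : ∀ x y : F, x ∈ KF → y ∈ KF → x + y ∈ KF := by
    intro x y hx hy
    rw [memKF] at *
    rw [haddQ, hx, hy]
  have hKFmul : ∀ x y : F, x ∈ KF → y ∈ KF → x * y ∈ KF := by
    intro x y hx hy
    rw [memKF] at *
    rw [mul_pow, hx, hy]
  have hKFpowd : ∀ x : F, x ∈ KF → x ^ d ∈ KF := by
    intro x hx
    rw [memKF] at *
    rw [← pow_mul, mul_comm, pow_mul, hx]
  have hKFcard_le : KF.card ≤ Q := by
    have hne := FiniteField.X_pow_card_sub_X_ne_zero F (show 1 < Q by omega)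
    have hdeg := FiniteField.X_pow_card_sub_X_natDegree_eq F (show 1 < Q by omega)
    have hsub : KF ⊆ (Polynomial.X ^ Q - Polynomial.X : Polynomial F).roots.toFinset := by
      intro x hx
      rw [Multiset.mem_toFinset, Polynomial.mem_roots hne]
      have hx' := (memKF x).mp hx
      simp [Polynomial.IsRoot, sub_eq_zero, hx']
    calc KF.card ≤ (Polynomial.X ^ Q - Polynomial.X : Polynomial F).roots.toFinset.card :=
          Finset.card_le_card hsub
      _ ≤ Multiset.card (Polynomial.X ^ Q - Polynomial.X : Polynomial F).roots :=
          Multiset.toFinset_card_le _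
      _ ≤ (Polynomial.X ^ Q - Polynomial.X : Polynomial F).natDegree := Polynomial.card_roots' _
      _ = Q := hdeg
  -- the additive map L x = x^Q + x and its fibers
  set L : F → F := fun x => x ^ Q + x with hLdef
  have hLadd : ∀ x y : F, L (x + y) = L x + L y := by
    intro x y
    simp only [hLdef, hQdef]
    rw [add_pow_char_pow]
    ring
  have hLKF : ∀ x : F, (x ∈ KF ↔ L x = 0) := by
    intro x
    rw [memKF]
    simp only [hLdef]
    constructor
    · intro h; rw [h]; exact CharTwo.add_self_eq_zero x
    · intro h
      have h2 : x ^ Q = -x := eq_neg_of_add_eq_zero_left h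
      rw [h2, CharTwo.neg_eq]
  set RF : Finset F := Finset.univ.image L with hRFdef
  have hRFsub : RF ⊆ KF := by
    intro k hk
    rw [hRFdef] at hk
    obtain ⟨x, _, rfl⟩ := Finset.mem_image.mp hk
    rw [memKF]
    simp only [hLdef, hQdef]
    rw [add_pow_char_pow, ← pow_mul]
    have hxq : x ^ (2 ^ m * 2 ^ m) = x := by
      have : 2 ^ m * 2 ^ m = Fintype.card F := by rw [hq, hQdef]; ring
      rw [this, FiniteField.pow_card]
    rw [hxq]
    exact add_comm _ _
  have hfiber : ∀ k ∈ RF, (Finset.univ.filter (fun x : F => L x = k)).card = KF.card := by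
    intro k hk
    rw [hRFdef] at hk
    obtain ⟨x₁, _, hx₁⟩ := Finset.mem_image.mp hk
    refine (Finset.card_nbij' (i := fun c => c + x₁) (j := fun x => x + x₁) ?_ ?_ ?_ ?_).symm
    · intro c hc
      simp only [Finset.mem_coe, Finset.mem_filter, Finset.mem_univ, true_and]
      rw [hLadd, (hLKF c).mp hc, zero_add, hx₁]
    · intro x hx
      simp only [Finset.mem_coe, Finset.mem_filter, Finset.mem_univ, true_and] at hx
      simp only [Finset.mem_coe]; rw [hLKF, hLadd, hx, hx₁, CharTwo.add_self_eq_zero]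
    · intro c _; simp only; rw [add_assoc, CharTwo.add_self_eq_zero, add_zero]
    · intro x _; simp only; rw [add_assoc, CharTwo.add_self_eq_zero, add_zero]
  have hcount : Q ^ 2 = RF.card * KF.card := by
    have h := Finset.card_eq_sum_card_fiberwise
      (f := L) (s := Finset.univ) (t := RF)
      (fun x _ => by rw [hRFdef]; exact Finset.mem_image_of_mem _ (Finset.mem_univ x))
    rw [Finset.card_univ, hq] at h
    rw [Finset.sum_congr rfl hfiber, Finset.sum_const, smul_eq_mul] at h
    exact h
  have hRFcard_le : RF.card ≤ KF.card := Finset.card_le_card hRFsub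
  have hKFcard : KF.card = Q := by nlinarith [hcount, hKFcard_le, hRFcard_le, hQ0]
  have hRFcard : RF.card = Q := by nlinarith [hcount, hKFcard_le, hRFcard_le, hQ0, hKFcard]
  have hRFKF : RF = KF := Finset.eq_of_subset_of_card_le hRFsub (by rw [hKFcard, hRFcard])
  -- the character is trivial on KF
  have htrKF : ∀ k ∈ KF, psiR F k = 1 := by
    intro k hk
    rw [← hRFKF, hRFdef] at hk
    obtain ⟨x, _, rfl⟩ := Finset.mem_image.mp hk
    simp only [hLdef, hQdef]
    rw [psiR_add, psiR_pow2pow]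
    rcases psiR_values (F := F) x with h | h <;> rw [h] <;> norm_num
  -- the key character sum over KF
  have keyK : ∀ c : F, (∑ u ∈ KF, psiR F (u * c)) = if c ∈ KF then (Q:ℝ) else 0 := by
    have hBval : ∀ c : F, (∑ u ∈ KF, psiR F (u * c)) =
        if (∀ u ∈ KF, psiR F (u * c) = 1) then (Q:ℝ) else 0 := by
      intro c
      by_cases hc : ∀ u ∈ KF, psiR F (u * c) = 1
      · rw [if_pos hc, Finset.sum_congr rfl hc, Finset.sum_const, hKFcard]
        simp
      · rw [if_neg hc]
        push_neg at hc
        obtain ⟨u₀, hu₀KF, hu₀⟩ := hc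
        have hu₀' : psiR F (u₀ * c) = -1 := (psiR_values _).resolve_left hu₀
        have hshift : ∑ u ∈ KF, psiR F (u * c) = ∑ u ∈ KF, psiR F ((u₀ + u) * c) := by
          refine Finset.sum_nbij' (i := fun u => u₀ + u) (j := fun u => u₀ + u)
            ?_ ?_ ?_ ?_ ?_
          · intro a ha; exact hKFadd u₀ a hu₀KF ha
          · intro a ha; exact hKFadd u₀ a hu₀KF ha
          · intro a _; rw [← add_assoc, CharTwo.add_self_eq_zero, zero_add]
          · intro a _; rw [← add_assoc, CharTwo.add_self_eq_zero, zero_add]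
          · intro a _
            rw [← add_assoc, CharTwo.add_self_eq_zero, zero_add]
        have hsum : ∑ u ∈ KF, psiR F ((u₀ + u) * c) = - ∑ u ∈ KF, psiR F (u * c) := by
          have : ∀ u ∈ KF, psiR F ((u₀ + u) * c) = - psiR F (u * c) := by
            intro u _
            rw [add_mul, psiR_add, hu₀', neg_one_mul]
          rw [Finset.sum_congr rfl this]
          exact Finset.sum_neg_distrib _
        linarith [hshift, hsum]
    -- counting
    set B : Finset F := Finset.univ.filter (fun c : F => ∀ u ∈ KF, psiR F (u * c) = 1)
      with hBdef
    have hBmem : ∀ c : F, c ∈ B ↔ ∀ u ∈ KF, psiR F (u * c) = 1 := by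
      intro c; rw [hBdef, Finset.mem_filter]; simp
    have hBcard : (B.card : ℝ) * Q = (Q:ℝ)^2 := by
      have hswap : ∑ c : F, ∑ u ∈ KF, psiR F (u * c)
          = ∑ u ∈ KF, ∑ c : F, psiR F (u * c) := Finset.sum_comm
      have hrhs : ∑ u ∈ KF, ∑ c : F, psiR F (u * c) = (Q:ℝ)^2 := by
        rw [← Finset.add_sum_erase _ _ hKF0]
        have h0 : ∑ c : F, psiR F ((0:F) * c) = (Q:ℝ)^2 := by
          simp only [zero_mul, psiR_zero]
          rw [Finset.sum_const, Finset.card_univ, nsmul_eq_mul, mul_one, hcardR]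
        have hrest : ∑ u ∈ KF.erase 0, ∑ c : F, psiR F (u * c) = 0 := by
          refine Finset.sum_eq_zero fun u hu => sum_psiR_mul u (Finset.ne_of_mem_erase hu)
        rw [h0, hrest, add_zero]
      have hlhs : ∑ c : F, ∑ u ∈ KF, psiR F (u * c) = (B.card : ℝ) * Q := by
        rw [Finset.sum_congr rfl (fun c _ => hBval c)]
        have hic : ∀ c : F, (if (∀ u ∈ KF, psiR F (u * c) = 1) then (Q:ℝ) else 0)
            = if c ∈ B then (Q:ℝ) else 0 := fun c => if_congr (hBmem c).symm rfl rfl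
        rw [Finset.sum_congr rfl (fun c _ => hic c)]
        rw [Finset.sum_ite_mem, Finset.univ_inter, Finset.sum_const, nsmul_eq_mul]
      rw [hswap] at hlhs
      rw [← hlhs, hrhs]
    have hQR : (Q:ℝ) ≠ 0 := by positivity
    have hBcardQ : B.card = Q := by
      have h2 : (B.card : ℝ) = Q := by
        have h3 : (B.card : ℝ) * Q = (Q:ℝ) * Q := by rw [hBcard]; ring
        exact mul_right_cancel₀ hQR h3
      exact_mod_cast h2
    have hKB : KF ⊆ B := by
      intro k hk
      rw [hBmem]
      exact fun u hu => htrKF _ (hKFmul u k hu hk)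
    have hBKF : B = KF := (Finset.eq_of_subset_of_card_le hKB
      (by rw [hBcardQ, hKFcard])).symm
    intro c
    rw [hBval c]
    congr 1
    rw [← hBmem, hBKF]
  -- injectivity of x ↦ x^d
  have hinj : Function.Injective (fun x : F => x ^ d) := by
    intro x y hxy
    simp only at hxy
    by_cases hx : x = 0
    · subst hx
      rw [zero_pow (by omega : d ≠ 0)] at hxy
      exact (pow_eq_zero_iff (by omega : d ≠ 0)).mp hxy.symm |>.symm
    by_cases hy : y = 0
    · subst hy
      rw [zero_pow (by omega : d ≠ 0)] at hxy
      exact (pow_eq_zero_iff (by omega : d ≠ 0)).mp hxy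
    have hz : (x * y⁻¹) ^ d = 1 := by
      rw [mul_pow, hxy, inv_pow, mul_inv_cancel₀ (pow_ne_zero _ hy)]
    have h1 : orderOf (x * y⁻¹) ∣ d := orderOf_dvd_of_pow_eq_one hz
    have h2 : (x * y⁻¹) ^ (Fintype.card F - 1) = 1 :=
      FiniteField.pow_card_sub_one_eq_one _ (mul_ne_zero hx (inv_ne_zero hy))
    have h3 : orderOf (x * y⁻¹) ∣ Fintype.card F - 1 := orderOf_dvd_of_pow_eq_one h2
    have h4 : orderOf (x * y⁻¹) ∣ Nat.gcd d (Fintype.card F - 1) := Nat.dvd_gcd h1 h3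
    rw [hgcd, Nat.dvd_one] at h4
    have h5 : x * y⁻¹ = 1 := orderOf_eq_one_iff.mp h4
    field_simp at h5
    exact h5
  -- w 0 = 0
  have hw0 : w 0 = 0 := by
    simp only [hwdef, zero_mul, add_zero]
    have hbij : Function.Bijective (fun x : F => x ^ d) :=
      Finite.injective_iff_bijective.mp hinj
    have h := Fintype.sum_bijective _ hbij (fun x => psiR F (x ^ d)) (psiR F) (fun x => rfl)
    rw [h]; exact sum_psiR
  -- FIRST MOMENT : ∑_{a ∈ KF} w a = Q^2
  have hF1 : ∑ a ∈ KF, w a = (Q:ℝ)^2 := by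
    simp only [hwdef]
    rw [Finset.sum_comm]
    have h1 : ∀ x : F, ∑ a ∈ KF, psiR F (x ^ d + a * x)
        = psiR F (x ^ d) * (if x ∈ KF then (Q:ℝ) else 0) := by
      intro x
      simp_rw [psiR_add]
      rw [← Finset.mul_sum, keyK x]
    rw [Finset.sum_congr rfl (fun x _ => h1 x)]
    have h2 : ∀ x : F, psiR F (x ^ d) * (if x ∈ KF then (Q:ℝ) else 0)
        = if x ∈ KF then psiR F (x ^ d) * Q else 0 := by
      intro x; split <;> simp
    rw [Finset.sum_congr rfl (fun x _ => h2 x), Finset.sum_ite_mem, Finset.univ_inter]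
    have h3 : ∀ x ∈ KF, psiR F (x ^ d) * (Q:ℝ) = (Q:ℝ) := by
      intro x hx
      rw [htrKF _ (hKFpowd x hx), one_mul]
    rw [Finset.sum_congr rfl h3, Finset.sum_const, hKFcard]
    simp [sq]
  -- SECOND MOMENT
  set hfun : F → F := fun s => s ^ d + (s + 1) ^ d with hhdef
  set NS : Finset F := Finset.univ.filter (fun s : F => hfun s ∈ KF) with hNSdef
  have hstep : ∑ a ∈ KF, (w a)^2 = (Q:ℝ)^2 * NS.card := by
    have e1 : ∀ a : F, (w a)^2
        = ∑ x : F, ∑ y : F, psiR F (x ^ d + y ^ d) * psiR F (a * (x + y)) := by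
      intro a
      simp only [hwdef, sq]
      rw [Finset.sum_mul_sum]
      refine Finset.sum_congr rfl fun x _ => Finset.sum_congr rfl fun y _ => ?_
      rw [psiR_add, psiR_add, psiR_add, mul_add, psiR_add]
      ring
    calc ∑ a ∈ KF, (w a)^2
        = ∑ a ∈ KF, ∑ x : F, ∑ y : F, psiR F (x ^ d + y ^ d) * psiR F (a * (x + y)) :=
          Finset.sum_congr rfl (fun a _ => e1 a)
      _ = ∑ x : F, ∑ y : F, psiR F (x ^ d + y ^ d) * ∑ a ∈ KF, psiR F (a * (x + y)) := by
          rw [Finset.sum_comm]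
          refine Finset.sum_congr rfl fun x _ => ?_
          rw [Finset.sum_comm]
          refine Finset.sum_congr rfl fun y _ => ?_
          rw [Finset.mul_sum]
      _ = ∑ x : F, ∑ y : F, psiR F (x ^ d + y ^ d) * (if x + y ∈ KF then (Q:ℝ) else 0) := by
          refine Finset.sum_congr rfl fun x _ => Finset.sum_congr rfl fun y _ => ?_
          rw [keyK]
      _ = ∑ x : F, ∑ v : F, psiR F (x ^ d + (x + v) ^ d) * (if v ∈ KF then (Q:ℝ) else 0) := by
          refine Finset.sum_congr rfl fun x _ => ?_
          refine (Fintype.sum_equiv (Equiv.addLeft x) _ _ ?_).symm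
          intro v
          simp only [Equiv.coe_addLeft]
          congr 2
          rw [← add_assoc, CharTwo.add_self_eq_zero, zero_add]
      _ = ∑ v : F, (if v ∈ KF then (Q:ℝ) else 0) * ∑ x : F, psiR F (x ^ d + (x + v) ^ d) := by
          rw [Finset.sum_comm]
          refine Finset.sum_congr rfl fun v _ => ?_
          rw [Finset.mul_sum]
          refine Finset.sum_congr rfl fun x _ => ?_
          ring
      _ = ∑ v ∈ KF, ∑ x : F, (Q:ℝ) * psiR F (x ^ d + (x + v) ^ d) := by
          have h4 : ∀ v : F, (if v ∈ KF then (Q:ℝ) else 0) * ∑ x : F, psiR F (x ^ d + (x + v) ^ d)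
              = if v ∈ KF then ∑ x : F, (Q:ℝ) * psiR F (x ^ d + (x + v) ^ d) else 0 := by
            intro v
            split
            · rw [Finset.mul_sum]
            · simp
          rw [Finset.sum_congr rfl (fun v _ => h4 v), Finset.sum_ite_mem, Finset.univ_inter]
      _ = (Q:ℝ)^2 * NS.card := by
          rw [← Finset.add_sum_erase _ _ hKF0]
          have hv0 : ∑ x : F, (Q:ℝ) * psiR F (x ^ d + (x + 0) ^ d) = (Q:ℝ) * (Q:ℝ)^2 := by
            have hxx : ∀ x : F, (Q:ℝ) * psiR F (x ^ d + (x + 0) ^ d) = (Q:ℝ) := by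
              intro x
              rw [add_zero, CharTwo.add_self_eq_zero, psiR_zero, mul_one]
            rw [Finset.sum_congr rfl (fun x _ => hxx x), Finset.sum_const,
              Finset.card_univ, nsmul_eq_mul, hcardR]
            ring
          have hvrest : ∑ v ∈ KF.erase 0, ∑ x : F, (Q:ℝ) * psiR F (x ^ d + (x + v) ^ d)
              = (Q:ℝ) * ((Q:ℝ) * NS.card - (Q:ℝ)^2) := by
            have e2 : ∀ v ∈ KF.erase 0,
                (∑ x : F, (Q:ℝ) * psiR F (x ^ d + (x + v) ^ d))
                = (Q:ℝ) * ∑ s : F, psiR F (v ^ d * hfun s) := by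
              intro v hv
              have hv0' : v ≠ 0 := Finset.ne_of_mem_erase hv
              rw [← Finset.mul_sum]
              congr 1
              refine (Fintype.sum_equiv (Equiv.mulLeft₀ v hv0') _ _ ?_).symm
              intro s
              show psiR F (v ^ d * hfun s) = psiR F ((v * s) ^ d + (v * s + v) ^ d)
              congr 1
              simp only [hhdef]
              rw [mul_add, ← mul_pow, ← mul_pow, mul_add, mul_one]
            rw [Finset.sum_congr rfl e2, ← Finset.mul_sum]
            congr 1
            rw [Finset.sum_comm]
            have e3 : ∀ c : F, ∑ v ∈ KF.erase 0, psiR F (v ^ d * c)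
                = (if c ∈ KF then (Q:ℝ) else 0) - 1 := by
              intro c
              have himg : (KF.erase 0).image (fun v : F => v ^ d) = KF.erase 0 := by
                apply Finset.eq_of_subset_of_card_le
                · intro u hu
                  obtain ⟨v, hv, rfl⟩ := Finset.mem_image.mp hu
                  rw [Finset.mem_erase] at hv ⊢
                  exact ⟨pow_ne_zero d hv.1, hKFpowd v hv.2⟩
                · rw [Finset.card_image_of_injOn (Function.Injective.injOn hinj)]
              have hre : ∑ v ∈ KF.erase 0, psiR F (v ^ d * c)
                  = ∑ u ∈ KF.erase 0, psiR F (u * c) := by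
                refine Finset.sum_nbij (i := fun v : F => v ^ d) ?_ ?_ ?_ ?_
                · intro a ha; rw [← himg]; exact Finset.mem_image_of_mem _ ha
                · exact Function.Injective.injOn hinj
                · intro u hu
                  rw [← Finset.coe_image, himg]
                  exact hu
                · intro a _; rfl
              rw [hre, Finset.sum_erase_eq_sub hKF0, keyK c, zero_mul, psiR_zero]
            rw [Finset.sum_congr rfl (fun s _ => e3 (hfun s))]
            rw [Finset.sum_sub_distrib]
            have e4 : ∑ s : F, (if hfun s ∈ KF then (Q:ℝ) else 0) = (Q:ℝ) * NS.card := by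
              rw [← Finset.sum_filter, ← hNSdef, Finset.sum_const, nsmul_eq_mul, mul_comm]
            rw [e4, Finset.sum_const, Finset.card_univ, nsmul_eq_mul, mul_one, hcardR]
          rw [hv0, hvrest]
          ring
  -- N_K ≥ 2Q
  have hNS : 2 * Q ≤ NS.card := by
    set T1 : Finset F := Finset.univ.filter (fun s : F => s ^ Q = s + 1) with hT1def
    have hmemT1 : ∀ s : F, s ∈ T1 ↔ s ^ Q = s + 1 := by
      intro s; rw [hT1def, Finset.mem_filter]; simp
    have hKFNS : KF ⊆ NS := by
      intro s hs
      rw [hNSdef, Finset.mem_filter]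
      refine ⟨Finset.mem_univ _, ?_⟩
      simp only [hhdef]
      exact hKFadd _ _ (hKFpowd s hs) (hKFpowd _ (hKFadd s 1 hs hKF1))
    have hT1NS : T1 ⊆ NS := by
      intro s hs
      rw [hmemT1] at hs
      rw [hNSdef, Finset.mem_filter]
      refine ⟨Finset.mem_univ _, ?_⟩
      rw [memKF]
      simp only [hhdef]
      have hs1 : (s + 1) ^ Q = s := by
        rw [haddQ, one_pow, hs, add_assoc, CharTwo.add_self_eq_zero, add_zero]
      have hA : (s ^ d) ^ Q = (s + 1) ^ d := by rw [pow_right_comm, hs]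
      have hB : ((s + 1) ^ d) ^ Q = s ^ d := by rw [pow_right_comm, hs1]
      rw [haddQ, hA, hB]
      exact add_comm _ _
    have hdisj : Disjoint KF T1 := by
      rw [Finset.disjoint_left]
      intro s hs hsT
      rw [memKF] at hs
      rw [hmemT1] at hsT
      rw [hs] at hsT
      have : (1:F) = 0 := by
        have h6 := hsT
        nth_rewrite 1 [← add_zero s] at h6
        exact (add_left_cancel h6).symm
      exact one_ne_zero this
    have hT1card : T1.card = Q := by
      have h1KF : (1:F) ∈ RF := by rw [hRFKF]; exact hKF1
      rw [hRFdef] at h1KF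
      obtain ⟨x₁, _, hx₁⟩ := Finset.mem_image.mp h1KF
      have hx₁' : x₁ ^ Q + x₁ = 1 := hx₁
      have hx₁Q : x₁ ^ Q = 1 + x₁ := by
        rw [← hx₁', add_assoc, CharTwo.add_self_eq_zero, add_zero]
      have hbij : KF.card = T1.card := by
        refine Finset.card_nbij' (i := fun c => c + x₁) (j := fun s => s + x₁) ?_ ?_ ?_ ?_
        · intro c hc
          simp only [Finset.mem_coe]; rw [hmemT1]
          have hc' := (memKF c).mp hc
          rw [haddQ, hc', hx₁Q]
          ring
        · intro s hs
          rw [Finset.mem_coe, hmemT1] at hs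
          simp only [Finset.mem_coe]; rw [memKF, haddQ, hs, hx₁Q]
          calc s + 1 + (1 + x₁) = s + x₁ + (1 + 1) := by ring
            _ = s + x₁ := by rw [CharTwo.add_self_eq_zero, add_zero]
        · intro c _; simp only; rw [add_assoc, CharTwo.add_self_eq_zero, add_zero]
        · intro s _; simp only; rw [add_assoc, CharTwo.add_self_eq_zero, add_zero]
      rw [← hbij, hKFcard]
    calc 2 * Q = KF.card + T1.card := by rw [hKFcard, hT1card]; ring
      _ = (KF ∪ T1).card := (Finset.card_union_of_disjoint hdisj).symm
      _ ≤ NS.card := Finset.card_le_card (Finset.union_subset hKFNS hT1NS)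
  have hF2 : 2*(Q:ℝ)^3 ≤ ∑ a ∈ KF, (w a)^2 := by
    rw [hstep]
    have hcastNS : 2*(Q:ℝ) ≤ (NS.card : ℝ) := by
      have := Nat.cast_le (α := ℝ) |>.mpr hNS
      push_cast at this
      linarith
    have hQQ : (0:ℝ) ≤ (Q:ℝ)^2 := sq_nonneg _
    calc 2*(Q:ℝ)^3 = (Q:ℝ)^2 * (2*(Q:ℝ)) := by ring
      _ ≤ (Q:ℝ)^2 * (NS.card : ℝ) := mul_le_mul_of_nonneg_left hcastNS hQQ
  -- FINAL: contradiction argument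
  by_contra hcon
  push_neg at hcon
  set T : ℝ := 2 ^ (m/2) with hTdef
  have hQcast : ((Q:ℕ):ℝ) = 2 ^ m := by rw [hQdef]; push_cast; ring
  have hT1 : (1:ℝ) ≤ T := one_le_pow₀ (by norm_num)
  have hT2 : T^2 ≤ (Q:ℝ) := by
    rw [hTdef, ← pow_mul, hQcast]
    apply pow_le_pow_right₀ (by norm_num)
    omega
  have hb : ∀ a ∈ KF.erase 0, w a ≤ (Q:ℝ) + T := by
    intro a ha
    have ha0 : a ≠ 0 := Finset.ne_of_mem_erase ha
    have h := hcon a ha0 (w a) (hweil a)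
    rw [hQcast, hTdef]
    linarith
  set E : Finset F := KF.erase 0 with hEdef
  have hEcard : E.card = Q - 1 := by rw [hEdef, Finset.card_erase_of_mem hKF0, hKFcard]
  have hEcast : (E.card : ℝ) = (Q:ℝ) - 1 := by
    rw [hEcard]
    push_cast [Nat.cast_sub (by omega : 1 ≤ Q)]
    ring
  set g : F → ℝ := fun a => w a - Q with hgdef
  have hg1 : ∑ a ∈ E, g a = Q := by
    have h1 : ∑ a ∈ E, w a = (Q:ℝ)^2 := by
      rw [hEdef, Finset.sum_erase_eq_sub hKF0, hF1, hw0, sub_zero]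
    simp only [hgdef]
    rw [Finset.sum_sub_distrib, h1, Finset.sum_const, nsmul_eq_mul, hEcast]
    ring
  have hg2 : (Q:ℝ)^3 - (Q:ℝ)^2 ≤ ∑ a ∈ E, (g a)^2 := by
    have hKsum : (Q:ℝ)^3 ≤ ∑ a ∈ KF, (g a)^2 := by
      have expand1 : ∑ a ∈ KF, (g a)^2
          = ∑ a ∈ KF, ((w a)^2 - 2*(Q:ℝ)*(w a) + (Q:ℝ)^2) :=
        Finset.sum_congr rfl (fun a _ => by simp only [hgdef]; ring)
      rw [expand1, Finset.sum_add_distrib, Finset.sum_sub_distrib, Finset.sum_const,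
        ← Finset.mul_sum, hF1, hKFcard, nsmul_eq_mul]
      nlinarith [hF2]
    have hEq : ∑ a ∈ E, (g a)^2 = ∑ a ∈ KF, (g a)^2 - (g 0)^2 := by
      rw [hEdef]; exact Finset.sum_erase_eq_sub hKF0
    have hg0 : g 0 = -(Q:ℝ) := by simp only [hgdef]; rw [hw0]; ring
    rw [hEq, hg0]
    nlinarith [hKsum]
  set gp : F → ℝ := fun a => max (g a) 0 with hgpdef
  set gn : F → ℝ := fun a => max (-(g a)) 0 with hgndef
  have hsplit : ∀ a : F, g a = gp a - gn a := by
    intro a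
    simp only [hgpdef, hgndef]
    rcases le_total (g a) 0 with h | h
    · rw [max_eq_right h, max_eq_left (by linarith)]; ring
    · rw [max_eq_left h, max_eq_right (by linarith)]; ring
  have hsq : ∀ a : F, (g a)^2 = (gp a)^2 + (gn a)^2 := by
    intro a
    simp only [hgpdef, hgndef]
    rcases le_total (g a) 0 with h | h
    · rw [max_eq_right h, max_eq_left (by linarith)]; ring
    · rw [max_eq_left h, max_eq_right (by linarith)]; ring
  have hgp0 : ∀ a : F, 0 ≤ gp a := fun a => le_max_right _ _
  have hgn0 : ∀ a : F, 0 ≤ gn a := fun a => le_max_right _ _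
  set P : ℝ := ∑ a ∈ E, gp a with hPdef
  set Nn : ℝ := ∑ a ∈ E, gn a with hNndef
  have hPN : P - Nn = Q := by
    have hps : ∑ a ∈ E, (gp a - gn a) = ∑ a ∈ E, g a :=
      Finset.sum_congr rfl (fun a _ => (hsplit a).symm)
    rw [hPdef, hNndef, ← Finset.sum_sub_distrib, hps, hg1]
  have hgple : ∀ a ∈ E, gp a ≤ T := by
    intro a ha
    simp only [hgpdef]
    apply max_le
    · have := hb a (by rwa [hEdef] at ha ⊢)
      simp only [hgdef]
      linarith
    · linarith
  have hPle : P ≤ ((Q:ℝ) - 1) * T := by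
    rw [hPdef]
    calc ∑ a ∈ E, gp a ≤ ∑ a ∈ E, T := Finset.sum_le_sum hgple
      _ = E.card * T := by rw [Finset.sum_const, nsmul_eq_mul]
      _ = ((Q:ℝ) - 1) * T := by rw [hEcast]
  have hNn0 : 0 ≤ Nn := Finset.sum_nonneg (fun a _ => hgn0 a)
  have hsumgp : ∑ a ∈ E, (gp a)^2 ≤ T * P := by
    rw [hPdef, Finset.mul_sum]
    refine Finset.sum_le_sum fun a ha => ?_
    have h1 := hgple a ha
    have h2 := hgp0 a
    nlinarith
  have hsumgn : ∑ a ∈ E, (gn a)^2 ≤ Nn^2 := by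
    have h1 : ∀ a ∈ E, (gn a)^2 ≤ gn a * Nn := by
      intro a ha
      have h2 : gn a ≤ Nn := by
        rw [hNndef]
        exact Finset.single_le_sum (fun b _ => hgn0 b) ha
      nlinarith [hgn0 a]
    calc ∑ a ∈ E, (gn a)^2 ≤ ∑ a ∈ E, gn a * Nn := Finset.sum_le_sum h1
      _ = Nn * Nn := by rw [← Finset.sum_mul, ← hNndef]
      _ = Nn^2 := by ring
  have hmain : (Q:ℝ)^3 - (Q:ℝ)^2 ≤ T * P + Nn^2 := by
    have h1 : ∑ a ∈ E, (g a)^2 = ∑ a ∈ E, (gp a)^2 + ∑ a ∈ E, (gn a)^2 := by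
      rw [← Finset.sum_add_distrib]
      exact Finset.sum_congr rfl (fun a _ => hsq a)
    linarith [hg2, hsumgp, hsumgn]
  have hQr2 : (2:ℝ) ≤ (Q:ℝ) := by exact_mod_cast hQ2
  rcases le_or_gt (Q:ℝ) (((Q:ℝ) - 1) * T) with hcase | hcase
  · -- main case
    have hNle : Nn ≤ ((Q:ℝ) - 1) * T - Q := by linarith [hPN, hPle]
    have hTP : T * P ≤ T * (((Q:ℝ) - 1) * T) := by nlinarith [hT1, hPle]
    have hNn2 : Nn^2 ≤ (((Q:ℝ) - 1) * T - Q)^2 := by nlinarith [hNn0, hNle]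
    have hident : T * (((Q:ℝ) - 1) * T) + (((Q:ℝ) - 1) * T - Q)^2
        = ((Q:ℝ) - 1) * (Q:ℝ) * T^2 - 2 * (Q:ℝ) * (((Q:ℝ) - 1) * T) + (Q:ℝ)^2 := by
      ring
    have k1 : ((Q:ℝ) - 1) * (Q:ℝ) * T^2 ≤ ((Q:ℝ) - 1) * (Q:ℝ) * (Q:ℝ) := by
      have h0 : (0:ℝ) ≤ ((Q:ℝ) - 1) * (Q:ℝ) := by nlinarith
      nlinarith [hT2]
    have k2 : 2 * (Q:ℝ) * (Q:ℝ) ≤ 2 * (Q:ℝ) * (((Q:ℝ) - 1) * T) := by nlinarith [hcase]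
    nlinarith [hmain, hTP, hNn2, hident, k1, k2]
  · -- degenerate case (Q−1)T < Q : but P ≥ Q
    have hPQ : (Q:ℝ) ≤ P := by linarith [hPN, hNn0]
    linarith [hPle]
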